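/- arXiv:2605.05873 — 2 statements merged into one kernel-verified Lean document; each statement's English description precedes it below -/
import Mathlib

section
/- Let X_1, X_2, ... be i.i.d. draws from a distribution P on a countable set A with masses p_a, and for ε ∈ (0,1) define U_t := min{u ∈ (0,1] : u^{-1}(1-u)^t ≤ ε/3}. Then P(∃ a ∈ A, ∃ t ≥ 1 : N_t(a) = 0 and p_a > U_t) ≤ ε/3, where N_t(a) = #{i ≤ t : X_i = a}. -/
open MeasureTheory ProbabilityTheory
open scoped ENNReal

theorem stmt_8 {Ω α : Type*} {m : MeasurableSpace Ω}
    [MeasurableSpace α] [MeasurableSingletonClass α] [Countable α]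
    (μ : Measure Ω) [IsProbabilityMeasure μ]
    (X : ℕ → Ω → α) (hX : ∀ i, Measurable (X i))
    (hindep : iIndepFun X μ)
    (hident : ∀ i, IdentDistrib (X i) (X 0) μ μ)
    (ε : ℝ) (hε : ε ∈ Set.Ioo (0 : ℝ) 1) :
    μ {ω | ∃ a : α, ∃ t : ℕ, 1 ≤ t ∧ (∀ i < t, X i ω ≠ a) ∧
        sInf {u : ℝ | u ∈ Set.Ioc (0 : ℝ) 1 ∧ u⁻¹ * (1 - u) ^ t ≤ ε / 3} <
          (μ {ω' | X 0 ω' = a}).toReal} ≤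
      ENNReal.ofReal (ε / 3) := by
  classical
  obtain ⟨hε0, hε1⟩ := hε
  set q : α → ℝ≥0∞ := fun a => μ {ω' | X 0 ω' = a} with hq
  set p : α → ℝ := fun a => (q a).toReal with hp
  set U : ℕ → ℝ := fun t =>
    sInf {u : ℝ | u ∈ Set.Ioc (0 : ℝ) 1 ∧ u⁻¹ * (1 - u) ^ t ≤ ε / 3} with hUdef
  have hq_ne_top : ∀ a, q a ≠ ⊤ := fun a => (measure_ne_top μ _)
  have hq_le_one : ∀ a, q a ≤ 1 := fun a => prob_le_one
  have hp_le_one : ∀ a, p a ≤ 1 := fun a => by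
    rw [hp]
    exact ENNReal.toReal_le_of_le_ofReal zero_le_one (by simpa using hq_le_one a)
  have hp_nonneg : ∀ a, 0 ≤ p a := fun a => ENNReal.toReal_nonneg
  -- key real inequality
  have key : ∀ a t, 1 ≤ t → U t < p a → (1 - p a) ^ t ≤ ε / 3 * p a := by
    intro a t ht hlt
    have h1mem : (1 : ℝ) ∈ {u : ℝ | u ∈ Set.Ioc (0 : ℝ) 1 ∧ u⁻¹ * (1 - u) ^ t ≤ ε / 3} := by
      constructor
      · exact ⟨zero_lt_one, le_refl 1⟩
      · simp [zero_pow (by omega : t ≠ 0), le_of_lt (by linarith : (0:ℝ) < ε / 3)]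
    obtain ⟨u, hu, hult⟩ := exists_lt_of_csInf_lt ⟨1, h1mem⟩ hlt
    obtain ⟨⟨hu0, hu1⟩, hub⟩ := hu
    have hpa_pos : 0 < p a := lt_trans hu0 hult
    have h1 : (1 - u) ^ t ≤ ε / 3 * u := by
      have := mul_le_mul_of_nonneg_left hub (le_of_lt hu0)
      rw [← mul_assoc, mul_inv_cancel₀ (ne_of_gt hu0), one_mul] at this
      linarith [this]
    have h2 : (1 - p a) ^ t ≤ (1 - u) ^ t :=
      pow_le_pow_left₀ (by linarith [hp_le_one a]) (by linarith) t
    calc (1 - p a) ^ t ≤ (1 - u) ^ t := h2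
      _ ≤ ε / 3 * u := h1
      _ ≤ ε / 3 * p a := by nlinarith
  -- the event sets
  set E : α → Set Ω := fun a => {ω | ∃ t : ℕ, 1 ≤ t ∧ (∀ i < t, X i ω ≠ a) ∧ U t < p a} with hE
  have hsub : {ω | ∃ a : α, ∃ t : ℕ, 1 ≤ t ∧ (∀ i < t, X i ω ≠ a) ∧ U t < p a}
      ⊆ ⋃ a, E a := by
    intro ω ⟨a, ht⟩
    exact Set.mem_iUnion.2 ⟨a, ht⟩
  -- bound each μ (E a)
  have hEa : ∀ a, μ (E a) ≤ ENNReal.ofReal (ε / 3) * q a := by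
    intro a
    by_cases hex : ∃ t : ℕ, 1 ≤ t ∧ U t < p a
    · set t := Nat.find hex with htdef
      obtain ⟨ht1, htU⟩ := Nat.find_spec hex
      have hsubE : E a ⊆ ⋂ i ∈ Finset.range t, X i ⁻¹' {a}ᶜ := by
        intro ω ⟨t', ht'1, hne, hU'⟩
        have htle : t ≤ t' := Nat.find_min' hex ⟨ht'1, hU'⟩
        simp only [Set.mem_iInter, Finset.mem_range]
        intro i hi
        exact hne i (lt_of_lt_of_le hi htle)
      have hprod : μ (⋂ i ∈ Finset.range t, X i ⁻¹' {a}ᶜ)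
          = ∏ _i ∈ Finset.range t, (1 - q a) := by
        rw [hindep.meas_biInter (fun i _ => ⟨{a}ᶜ, (measurableSet_singleton a).compl, rfl⟩)]
        apply Finset.prod_congr rfl
        intro i _
        have hqi : μ (X i ⁻¹' {a}) = q a :=
          (hident i).measure_mem_eq (measurableSet_singleton a)
        rw [Set.preimage_compl, measure_compl ((hX i) (measurableSet_singleton a))
          (measure_ne_top μ _), measure_univ, hqi]
      have hqofReal : (1 : ℝ≥0∞) - q a = ENNReal.ofReal (1 - p a) := by
        rw [hp, ENNReal.ofReal_sub _ ENNReal.toReal_nonneg, ENNReal.ofReal_one,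
          ENNReal.ofReal_toReal (hq_ne_top a)]
      calc μ (E a) ≤ μ (⋂ i ∈ Finset.range t, X i ⁻¹' {a}ᶜ) := measure_mono hsubE
        _ = ∏ _i ∈ Finset.range t, (1 - q a) := hprod
        _ = (1 - q a) ^ t := by rw [Finset.prod_const, Finset.card_range]
        _ = ENNReal.ofReal ((1 - p a) ^ t) := by
            rw [hqofReal, ← ENNReal.ofReal_pow (by linarith [hp_le_one a])]
        _ ≤ ENNReal.ofReal (ε / 3 * p a) := ENNReal.ofReal_le_ofReal (key a t ht1 htU)
        _ = ENNReal.ofReal (ε / 3) * q a := by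
            rw [ENNReal.ofReal_mul (by linarith), hp, ENNReal.ofReal_toReal (hq_ne_top a)]
    · have : E a = ∅ := by
        ext ω
        simp only [hE, Set.mem_setOf_eq, Set.mem_empty_iff_false, iff_false]
        rintro ⟨t, ht1, _, hU⟩
        exact hex ⟨t, ht1, hU⟩
      rw [this, measure_empty]
      exact zero_le
  -- sum of q is one
  have hsum : ∑' a, q a = 1 := by
    rw [hq]
    have : ∀ a : α, {ω' | X 0 ω' = a} = X 0 ⁻¹' {a} := fun a => rfl
    simp_rw [this]
    rw [← measure_iUnion
      (fun a b hab => Set.disjoint_left.2 fun ω h1 h2 => hab (h1.symm.trans h2))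
      (fun a => (hX 0) (measurableSet_singleton a))]
    rw [show (⋃ a, X 0 ⁻¹' {a}) = Set.univ from by
      ext ω; simp]
    exact measure_univ
  calc μ {ω | ∃ a : α, ∃ t : ℕ, 1 ≤ t ∧ (∀ i < t, X i ω ≠ a) ∧ U t < p a}
      ≤ μ (⋃ a, E a) := measure_mono hsub
    _ ≤ ∑' a, μ (E a) := measure_iUnion_le E
    _ ≤ ∑' a, ENNReal.ofReal (ε / 3) * q a := ENNReal.tsum_le_tsum hEa
    _ = ENNReal.ofReal (ε / 3) * ∑' a, q a := ENNReal.tsum_mul_left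
    _ = ENNReal.ofReal (ε / 3) := by rw [hsum, mul_one]
end

section
/- Let X_1, X_2, ... be i.i.d. on a countable set A with masses p_a, and for each a and t let N_t(a) = #{i≤t : X_i = a}. Fix r ∈ A and let p_{(2)} = sup_{a≠r} p_a. Then for every integer t ≥ 1, E[max_{a≠r} N_t(a)] ≤ t·p_{(2)} + 2√(2t·log(t+1)). -/
open MeasureTheory ProbabilityTheory Real
open scoped ENNReal

section Aux

lemma aux_geom_tail {x : ℝ} (h0 : 0 ≤ x) (h1 : x < 1) (m' n : ℕ) :
    ∑ k ∈ Finset.Ioc m' n, x ^ k ≤ x ^ (m' + 1) / (1 - x) := by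
  have h1x : (0:ℝ) < 1 - x := by linarith
  rcases le_or_gt (m' + 1) (n + 1) with h | h
  · have hIoc : Finset.Ioc m' n = Finset.Ico (m' + 1) (n + 1) := by
      ext k; simp [Nat.lt_succ_iff, Nat.succ_le_iff]
    rw [hIoc, geom_sum_Ico' (by linarith : x ≠ 1) h]
    rw [div_le_div_iff₀ h1x h1x]
    have hxn : 0 ≤ x ^ (n + 1) := pow_nonneg h0 _
    nlinarith
  · have : Finset.Ioc m' n = ∅ := Finset.Ioc_eq_empty (by omega)
    rw [this, Finset.sum_empty]
    positivity

lemma aux_two_pow_le_factorial (k : ℕ) : 2 ^ k ≤ 2 * k.factorial := by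
  induction k with
  | zero => norm_num
  | succ n ih =>
    rcases Nat.eq_zero_or_pos n with rfl | hn
    · norm_num [Nat.factorial]
    · calc 2 ^ (n + 1) = 2 * 2 ^ n := by ring
        _ ≤ 2 * (2 * n.factorial) := Nat.mul_le_mul_left _ ih
        _ ≤ 2 * ((n + 1) * n.factorial) := by
            have h2 : 2 ≤ n + 1 := by omega
            exact Nat.mul_le_mul_left _ (Nat.mul_le_mul_right _ h2)
        _ = 2 * (n + 1).factorial := by rw [Nat.factorial_succ]

variable {Ω α : Type*} {m : MeasurableSpace Ω}
    [MeasurableSpace α] [MeasurableSingletonClass α] [DecidableEq α]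
    (μ : Measure Ω) [IsProbabilityMeasure μ]
    (X : ℕ → Ω → α)

lemma aux_union_bound (hX : ∀ i, Measurable (X i))
    (hindep : iIndepFun X μ)
    (hident : ∀ i, IdentDistrib (X i) (X 0) μ μ)
    (a : α) (t k : ℕ) :
    μ {ω | k ≤ ((Finset.range t).filter (fun i => X i ω = a)).card}
      ≤ (t.choose k : ℝ≥0∞) * (μ (X 0 ⁻¹' {a})) ^ k := by
  have hsub : {ω | k ≤ ((Finset.range t).filter (fun i => X i ω = a)).card}
      ⊆ ⋃ F ∈ Finset.powersetCard k (Finset.range t), ⋂ i ∈ F, X i ⁻¹' {a} := by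
    intro ω hω
    obtain ⟨F, hFsub, hFcard⟩ := Finset.exists_subset_card_eq hω
    have hF : F ∈ Finset.powersetCard k (Finset.range t) :=
      Finset.mem_powersetCard.2 ⟨hFsub.trans (Finset.filter_subset _ _), hFcard⟩
    have hmem : ω ∈ ⋂ i ∈ F, X i ⁻¹' {a} := by
      simp only [Set.mem_iInter]
      intro i hi
      have h2 := hFsub hi
      simp only [Finset.mem_filter] at h2
      exact h2.2
    exact Set.mem_biUnion hF hmem
  refine (measure_mono hsub).trans ?_
  refine (measure_biUnion_finset_le _ _).trans ?_
  have hEq : ∀ F ∈ Finset.powersetCard k (Finset.range t),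
      μ (⋂ i ∈ F, X i ⁻¹' {a}) = (μ (X 0 ⁻¹' {a})) ^ k := by
    intro F hF
    rw [hindep.meas_biInter (fun i _ => ⟨{a}, measurableSet_singleton a, rfl⟩)]
    have h3 : ∀ i ∈ F, μ (X i ⁻¹' {a}) = μ (X 0 ⁻¹' {a}) := by
      intro i _
      rw [← Measure.map_apply (hX i) (measurableSet_singleton a),
        ← Measure.map_apply (hX 0) (measurableSet_singleton a), (hident i).map_eq]
    rw [Finset.prod_congr rfl h3, Finset.prod_const, (Finset.mem_powersetCard.1 hF).2]
  rw [Finset.sum_congr rfl hEq, Finset.sum_const, Finset.card_powersetCard, Finset.card_range,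
    nsmul_eq_mul]

lemma aux_chernoff (hX : ∀ i, Measurable (X i))
    (hindep : iIndepFun X μ)
    (hident : ∀ i, IdentDistrib (X i) (X 0) μ μ)
    (a : α) (t k : ℕ) {l : ℝ} (hl0 : 0 ≤ l) (hl1 : l ≤ 1) :
    (μ {ω | (k : ℝ) ≤ ∑ i ∈ Finset.range t, (if X i ω = a then (1:ℝ) else 0)}).toReal
      ≤ Real.exp ((t : ℝ) * (l + l ^ 2) * (μ (X 0 ⁻¹' {a})).toReal - l * k) := by
  set g : α → ℝ := fun x => if x = a then 1 else 0 with hg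
  have hgmeas : Measurable g := by
    unfold g
    exact Measurable.ite (measurableSet_eq) measurable_const measurable_const
  set B : ℕ → Ω → ℝ := fun i => g ∘ X i with hB
  have hBmeas : ∀ i, Measurable (B i) := fun i => hgmeas.comp (hX i)
  have hBindep : iIndepFun B μ := hindep.comp _ (fun _ => hgmeas)
  set S : Ω → ℝ := ∑ i ∈ Finset.range t, B i with hS
  have hSapp : ∀ ω, S ω = ∑ i ∈ Finset.range t, (if X i ω = a then (1:ℝ) else 0) := by
    intro ω
    rw [hS, Finset.sum_apply]
    rfl
  have hSmeas : Measurable S := by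
    have h := Finset.measurable_sum (Finset.range t) (fun i (_ : i ∈ Finset.range t) => hBmeas i)
    have heq : S = fun ω => ∑ i ∈ Finset.range t, B i ω := by
      funext ω; simp [hS]
    rw [heq]; exact h
  have hSle : ∀ ω, S ω ≤ t := by
    intro ω
    rw [hSapp]
    calc ∑ i ∈ Finset.range t, (if X i ω = a then (1:ℝ) else 0)
        ≤ ∑ i ∈ Finset.range t, (1:ℝ) := by
          refine Finset.sum_le_sum fun i _ => ?_
          split <;> norm_num
      _ = t := by simp
  have hint : Integrable (fun ω => Real.exp (l * S ω)) μ := by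
    refine Integrable.mono' (integrable_const (Real.exp (l * t)))
      ((hSmeas.const_mul l).exp.aestronglyMeasurable) ?_
    refine Filter.Eventually.of_forall fun ω => ?_
    rw [Real.norm_eq_abs, abs_of_pos (Real.exp_pos _)]
    exact Real.exp_le_exp.2 (mul_le_mul_of_nonneg_left (hSle ω) hl0)
  set pa : ℝ := (μ (X 0 ⁻¹' {a})).toReal with hpa
  have hpa0 : 0 ≤ pa := ENNReal.toReal_nonneg
  have hmgfB : ∀ i, mgf (B i) μ l ≤ Real.exp ((l + l ^ 2) * pa) := by
    intro i
    have heq : (fun ω => Real.exp (l * B i ω))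
        = fun ω => 1 + (Real.exp l - 1) * (X i ⁻¹' {a}).indicator (fun _ => (1:ℝ)) ω := by
      funext ω
      by_cases h : X i ω = a
      · simp [hB, hg, h, Set.indicator_apply]
        try ring
      · simp [hB, hg, h, Set.indicator_apply]
        try ring
    have hmgf_eq : mgf (B i) μ l = 1 + (Real.exp l - 1) * (μ (X i ⁻¹' {a})).toReal := by
      have : mgf (B i) μ l = ∫ ω, Real.exp (l * B i ω) ∂μ := rfl
      rw [this, heq]
      rw [integral_add (integrable_const 1)
        (((integrable_const (1:ℝ)).indicator ((hX i) (measurableSet_singleton a))).const_mul _)]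
      rw [MeasureTheory.integral_const_mul, integral_const]
      simp only [measure_univ, ENNReal.toReal_one, smul_eq_mul, one_mul]
      rw [MeasureTheory.integral_indicator_const (1:ℝ) ((hX i) (measurableSet_singleton a))]
      simp [Measure.real]
    have hid : μ (X i ⁻¹' {a}) = μ (X 0 ⁻¹' {a}) := by
      rw [← Measure.map_apply (hX i) (measurableSet_singleton a),
        ← Measure.map_apply (hX 0) (measurableSet_singleton a), (hident i).map_eq]
    rw [hmgf_eq, hid, ← hpa]
    have hexpl : Real.exp l - 1 ≤ l + l ^ 2 := by
      have h := Real.abs_exp_sub_one_sub_id_le (x := l) (by rwa [abs_of_nonneg hl0])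
      have h2 := (abs_le.1 h).2
      linarith
    have h1 : (Real.exp l - 1) * pa ≤ (l + l ^ 2) * pa := by
      exact mul_le_mul_of_nonneg_right hexpl hpa0
    calc 1 + (Real.exp l - 1) * pa ≤ 1 + (l + l ^ 2) * pa := by linarith
      _ ≤ Real.exp ((l + l ^ 2) * pa) := by
          have := Real.add_one_le_exp ((l + l ^ 2) * pa)
          linarith
  have hmgfS : mgf S μ l ≤ Real.exp ((t : ℝ) * ((l + l ^ 2) * pa)) := by
    rw [hS, hBindep.mgf_sum hBmeas]
    calc ∏ i ∈ Finset.range t, mgf (B i) μ l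
        ≤ ∏ i ∈ Finset.range t, Real.exp ((l + l ^ 2) * pa) :=
          Finset.prod_le_prod (fun i _ => mgf_nonneg) (fun i _ => hmgfB i)
      _ = Real.exp ((t : ℝ) * ((l + l ^ 2) * pa)) := by
          rw [Finset.prod_const, Finset.card_range, ← Real.exp_nat_mul]
  have hset : {ω | (k : ℝ) ≤ ∑ i ∈ Finset.range t, (if X i ω = a then (1:ℝ) else 0)}
      = {ω | (k : ℝ) ≤ S ω} := by
    ext ω; rw [Set.mem_setOf_eq, Set.mem_setOf_eq, hSapp]
  rw [hset]
  calc (μ {ω | (k : ℝ) ≤ S ω}).toReal ≤ Real.exp (-l * k) * mgf S μ l :=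
        measure_ge_le_exp_mul_mgf (k : ℝ) hl0 hint
    _ ≤ Real.exp (-l * k) * Real.exp ((t : ℝ) * ((l + l ^ 2) * pa)) := by
        exact mul_le_mul_of_nonneg_left hmgfS (le_of_lt (Real.exp_pos _))
    _ = Real.exp ((t : ℝ) * (l + l ^ 2) * pa - l * k) := by
        rw [← Real.exp_add]; ring_nf

end Aux

set_option maxHeartbeats 2000000 in
theorem stmt_17 {Ω α : Type*} {m : MeasurableSpace Ω}
    [MeasurableSpace α] [MeasurableSingletonClass α] [Countable α] [DecidableEq α]
    (μ : Measure Ω) [IsProbabilityMeasure μ]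
    (X : ℕ → Ω → α) (hX : ∀ i, Measurable (X i))
    (hindep : iIndepFun X μ)
    (hident : ∀ i, IdentDistrib (X i) (X 0) μ μ)
    (r : α) (t : ℕ) (ht : 1 ≤ t) :
    ∫ ω, (⨆ a : {b : α // b ≠ r},
        (((Finset.range t).filter (fun i => X i ω = a.1)).card : ℝ)) ∂μ ≤
      t * (⨆ a : {b : α // b ≠ r}, (μ {ω | X 0 ω = a.1}).toReal) +
        2 * Real.sqrt (2 * t * Real.log (t + 1)) := by
  classical
  cases isEmpty_or_nonempty {b : α // b ≠ r} with
  | inl hemp =>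
    simp only [Real.iSup_of_isEmpty, integral_zero, mul_zero, zero_add]
    positivity
  | inr hne =>
  obtain ⟨N, hNdef⟩ : ∃ N : α → Ω → ℕ,
      ∀ a2 ω, N a2 ω = ((Finset.range t).filter (fun i => X i ω = a2)).card :=
    ⟨_, fun _ _ => rfl⟩
  simp only [← hNdef]
  set p : ℝ := ⨆ a : {b : α // b ≠ r}, (μ {ω | X 0 ω = a.1}).toReal with hpdef
  set L : ℝ := Real.log ((t : ℝ) + 1) with hLdef
  set c : ℝ := Real.sqrt (2 * (t : ℝ) * L) with hcdef
  have ht1 : (1:ℝ) ≤ (t:ℝ) := by exact_mod_cast ht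
  have htpos : (0:ℝ) < (t:ℝ) := by linarith only [ht1]
  have hL2 : Real.log 2 ≤ L := by
    rw [hLdef]; exact Real.log_le_log (by norm_num) (by linarith only [ht1])
  have hLpos : (0:ℝ) < L := lt_of_lt_of_le (Real.log_pos (by norm_num)) hL2
  have hc0 : (0:ℝ) ≤ c := Real.sqrt_nonneg _
  have hc2 : c ^ 2 = 2 * (t:ℝ) * L := by rw [hcdef]; exact Real.sq_sqrt (by positivity)
  set q : α → ℝ≥0∞ := fun a2 => μ (X 0 ⁻¹' {a2}) with hqdef
  have hqtop : ∀ a2, q a2 ≠ ⊤ := fun a2 => measure_ne_top μ _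
  set P : α → ℝ := fun a2 => (q a2).toReal with hPdef
  have hP0 : ∀ a2, 0 ≤ P a2 := fun a2 => ENNReal.toReal_nonneg
  have hP1 : ∀ a2, P a2 ≤ 1 := by
    intro a2
    have h := ENNReal.toReal_mono (by norm_num : (1:ℝ≥0∞) ≠ ⊤)
      (prob_le_one (μ := μ) (s := X 0 ⁻¹' {a2}))
    simpa using h
  have hpP : p = ⨆ a : {b : α // b ≠ r}, P a.1 := rfl
  have hbdd : BddAbove (Set.range fun a : {b : α // b ≠ r} => P a.1) := by
    refine ⟨1, ?_⟩; rintro x ⟨a, rfl⟩; exact hP1 a.1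
  have hpa : ∀ a : {b : α // b ≠ r}, P a.1 ≤ p := fun a => by
    rw [hpP]; exact le_ciSup hbdd a
  have hp0 : 0 ≤ p := by rw [hpP]; exact Real.iSup_nonneg fun a => hP0 a.1
  have htp0 : (0:ℝ) ≤ (t:ℝ) * p := mul_nonneg htpos.le hp0
  have hNle : ∀ a2 ω, N a2 ω ≤ t := fun a2 ω => by
    rw [hNdef]; exact (Finset.card_filter_le _ _).trans (Finset.card_range t).le
  have hNcast : ∀ a2 ω, (N a2 ω : ℝ) = ∑ i ∈ Finset.range t, (if X i ω = a2 then (1:ℝ) else 0) := by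
    intro a2 ω
    rw [hNdef, Finset.card_filter, Nat.cast_sum]
    refine Finset.sum_congr rfl fun i _ => ?_
    split <;> simp
  have hNmeas : ∀ a2, Measurable fun ω => N a2 ω := by
    intro a2
    have heq : (fun ω => N a2 ω) = fun ω => ∑ i ∈ Finset.range t, if X i ω = a2 then 1 else 0 := by
      funext ω; rw [hNdef]; exact Finset.card_filter _ _
    rw [heq]
    exact Finset.measurable_sum (Finset.range t) fun i _ =>
      Measurable.ite ((hX i) (measurableSet_singleton a2)) measurable_const measurable_const
  have hEmeas : ∀ a2 k, MeasurableSet {ω | k ≤ N a2 ω} :=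
    fun a2 k => (hNmeas a2) measurableSet_Ici
  set U : ℕ → Set Ω := fun k => ⋃ a : {b : α // b ≠ r}, {ω | k ≤ N a.1 ω} with hUdef
  have hUmeas : ∀ k, MeasurableSet (U k) := fun k => MeasurableSet.iUnion fun a => hEmeas a.1 k
  have hf0 : ∀ ω, 0 ≤ ⨆ a : {b : α // b ≠ r}, (N a.1 ω : ℝ) :=
    fun ω => Real.iSup_nonneg fun a => by positivity
  have hfle : ∀ ω, (⨆ a : {b : α // b ≠ r}, (N a.1 ω : ℝ)) ≤ (t:ℝ) :=
    fun ω => ciSup_le fun a => by exact_mod_cast hNle a.1 ω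
  have htriv : ∫ ω, (⨆ a : {b : α // b ≠ r}, (N a.1 ω : ℝ)) ∂μ ≤ (t:ℝ) := by
    have hint_t : ∫ _ω, (t:ℝ) ∂μ = (t:ℝ) := by simp
    rw [← hint_t]
    exact integral_mono_of_nonneg (Filter.Eventually.of_forall hf0) (integrable_const _)
      (Filter.Eventually.of_forall hfle)
  have hlog2lb : (0.693:ℝ) ≤ Real.log 2 := le_trans (by norm_num) Real.log_two_gt_d9.le
  have hlog2ub : Real.log 2 ≤ (0.694:ℝ) := le_trans Real.log_two_lt_d9.le (by norm_num)
  by_cases hcase : (t:ℝ) ≤ 8 * L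
  · have h2c : (t:ℝ) ≤ 2 * c := by
      nlinarith only [hc2, hc0, mul_le_mul_of_nonneg_left hcase htpos.le, htpos]
    linarith only [htriv, htp0, h2c]
  push_neg at hcase
  have ht27 : (27:ℝ) ≤ (t:ℝ) := by
    by_contra hlt
    push_neg at hlt
    refine absurd ?_ (not_le.2 hcase)
    have ht26 : (t:ℝ) ≤ 26 := by
      have h1 : t < 27 := by exact_mod_cast hlt
      have h2 : t ≤ 26 := by omega
      exact_mod_cast h2
    have hcomb := strictConcaveOn_log_Ioi.concaveOn.2 (Set.mem_Ioi.2 one_pos)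
      (Set.mem_Ioi.2 (by norm_num : (0:ℝ) < 27)) (by linarith only [ht26] : (0:ℝ) ≤ 1 - (t:ℝ)/26)
      (by positivity : (0:ℝ) ≤ (t:ℝ)/26) (by ring)
    rw [Real.log_one] at hcomb
    have harg : (1 - (t:ℝ)/26) • (1:ℝ) + ((t:ℝ)/26) • (27:ℝ) = (t:ℝ) + 1 := by
      simp only [smul_eq_mul]; ring
    rw [harg] at hcomb
    simp only [smul_eq_mul, mul_zero, zero_add] at hcomb
    have hlog27 : (3.25:ℝ) ≤ Real.log 27 := by
      have h32 : Real.log 32 = 5 * Real.log 2 := by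
        rw [show (32:ℝ) = 2^(5:ℕ) by norm_num, Real.log_pow]; push_cast; ring
      have hqd : Real.log 32 - Real.log 27 = Real.log (32/27) :=
        (Real.log_div (by norm_num) (by norm_num)).symm
      have hub : Real.log (32/27) ≤ 32/27 - 1 := Real.log_le_sub_one_of_pos (by norm_num)
      linarith only [h32, hqd, hub, hlog2lb]
    have hmul : (t:ℝ)/26 * 3.25 ≤ (t:ℝ)/26 * Real.log 27 :=
      mul_le_mul_of_nonneg_left hlog27 (by positivity)
    rw [hLdef]
    linarith only [hcomb, hmul]
  have hL4 : 4 * Real.log 2 ≤ L := by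
    rw [hLdef]
    calc 4 * Real.log 2 = Real.log (2^(4:ℕ)) := by rw [Real.log_pow]; push_cast; ring
      _ ≤ Real.log ((t:ℝ)+1) := Real.log_le_log (by positivity) (by norm_num; linarith only [ht27])
  have hL27 : (2.77:ℝ) ≤ L := by linarith only [hL4, hlog2lb]
  have hL32 : 8 * Real.log (3/2) ≤ L := by
    rw [hLdef]
    calc 8 * Real.log (3/2) = Real.log ((3/2:ℝ)^(8:ℕ)) := by rw [Real.log_pow]; push_cast; ring
      _ ≤ Real.log ((t:ℝ)+1) := Real.log_le_log (by positivity) (by norm_num; linarith only [ht27])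
  have hc12 : (12:ℝ) ≤ c := by
    nlinarith only [hc2, hc0, ht27, hL27]
  set k₀ : ℕ := ⌈(t:ℝ) * p + 3/2 * c⌉₊ with hk0def
  have hk0low : (t:ℝ) * p + 3/2 * c ≤ (k₀:ℝ) := Nat.le_ceil _
  have hk0up : (k₀:ℝ) ≤ (t:ℝ) * p + 3/2 * c + 1 :=
    (Nat.ceil_lt_add_one (by positivity)).le
  by_cases hk0t : t ≤ k₀
  · have h1 : (t:ℝ) ≤ (k₀:ℝ) := by exact_mod_cast hk0t
    linarith only [htriv, h1, hk0up, hc12]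
  push_neg at hk0t
  set l : ℝ := 3 * c / (4 * (t:ℝ)) with hldef
  have hcpos : (0:ℝ) < c := by linarith only [hc12]
  have hl0 : 0 < l := by rw [hldef]; positivity
  have hl1 : l ≤ 1 := by
    rw [hldef, div_le_one (by positivity)]
    nlinarith only [hc2, hc0, htpos,
      mul_pos htpos (by linarith only [hcase] : (0:ℝ) < (t:ℝ) - 8*L)]
  have htl2 : (t:ℝ) * l ^ 2 = 9/8 * L := by
    have h9 : l ^ 2 = 9 * c ^ 2 / (16 * (t:ℝ)^2) := by rw [hldef]; ring
    rw [h9, hc2]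
    field_simp
    ring
  have hlc : l * (3/2 * c) = 9/4 * L := by
    have h9 : l * (3/2 * c) = 9 * c^2 / (8 * (t:ℝ)) := by rw [hldef]; ring
    rw [h9, hc2]
    field_simp
    ring
  set x : ℝ := Real.exp (-l) with hxdef
  have hx0 : 0 < x := Real.exp_pos _
  have hx1 : x < 1 := by rw [hxdef]; exact Real.exp_lt_one_iff.2 (by linarith only [hl0])
  have h1x : l / 2 ≤ 1 - x := by
    have hA1 := Real.add_one_le_exp l
    have hB1 : x * Real.exp l = 1 := by rw [hxdef, ← Real.exp_add]; simp
    have hxle : x * (1 + l) ≤ 1 := by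
      nlinarith only [hB1, hA1, hx0.le]
    nlinarith only [hxle, hl0.le, hl1, hx0.le, (by linarith only [hl0] : (0:ℝ) < 1 + l)]
  have hdisjF : ∀ F : Finset α, ∑ a2 ∈ F, P a2 ≤ 1 := by
    intro F
    have hdisj : (↑F : Set α).PairwiseDisjoint (fun a2 => X 0 ⁻¹' {a2}) := by
      intro a2 _ b2 _ hab
      exact Disjoint.preimage _ (by simpa using hab)
    have hmeq : μ (⋃ a2 ∈ F, X 0 ⁻¹' {a2}) = ∑ a2 ∈ F, q a2 :=
      measure_biUnion_finset hdisj (fun a2 _ => (hX 0) (measurableSet_singleton a2))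
    have hle : ∑ a2 ∈ F, q a2 ≤ 1 := hmeq ▸ prob_le_one
    calc ∑ a2 ∈ F, P a2 = (∑ a2 ∈ F, q a2).toReal := (ENNReal.toReal_sum (fun a2 _ => hqtop a2)).symm
      _ ≤ (1:ℝ≥0∞).toReal := ENNReal.toReal_mono (by norm_num) hle
      _ = 1 := by norm_num
  have htsum_q : ∑' (a2 : α), q a2 ≤ 1 := by
    have hdisj : Pairwise (Function.onFun Disjoint (fun a2 : α => X 0 ⁻¹' {a2})) := by
      intro a2 b2 hab
      exact Disjoint.preimage _ (by simpa using hab)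
    rw [hqdef, ← measure_iUnion hdisj (fun a2 => (hX 0) (measurableSet_singleton a2))]
    exact prob_le_one
  set Sset : Set α := {a2 | a2 ≠ r ∧ 1 / ((t:ℝ) + 1) < P a2} with hSsetdef
  have hSfin : Sset.Finite := by
    by_contra hinf
    obtain ⟨F, hFsub, hFcard⟩ := Set.Infinite.exists_subset_card_eq hinf (t + 2)
    have hsum := hdisjF F
    have hlb : ∀ a2 ∈ F, 1 / ((t:ℝ) + 1) ≤ P a2 := fun a2 ha => (hFsub ha).2.le
    have h := Finset.card_nsmul_le_sum F P (1/((t:ℝ)+1)) hlb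
    rw [nsmul_eq_mul, hFcard] at h
    have hpos : (0:ℝ) < (t:ℝ)+1 := by linarith only [htpos]
    have hiv : ((t:ℝ)+1) * (1/((t:ℝ)+1)) = 1 := mul_one_div_cancel (ne_of_gt hpos)
    have hivpos : (0:ℝ) < 1/((t:ℝ)+1) := by positivity
    push_cast at h
    nlinarith only [h, hsum, hiv, hivpos]
  set SF : Finset α := hSfin.toFinset with hSFdef
  have hSFcard : (SF.card : ℝ) ≤ (t:ℝ) + 1 := by
    by_contra hgt
    push_neg at hgt
    have hsum := hdisjF SF
    have hlb : ∀ a2 ∈ SF, 1/((t:ℝ)+1) ≤ P a2 := fun a2 ha => ((hSfin.mem_toFinset).1 ha).2.le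
    have h := Finset.card_nsmul_le_sum SF P (1/((t:ℝ)+1)) hlb
    rw [nsmul_eq_mul] at h
    have hpos : (0:ℝ) < (t:ℝ)+1 := by linarith only [htpos]
    have hiv : ((t:ℝ)+1) * (1/((t:ℝ)+1)) = 1 := mul_one_div_cancel (ne_of_gt hpos)
    have hivpos : (0:ℝ) < 1/((t:ℝ)+1) := by positivity
    nlinarith only [h, hsum, hiv, hivpos, hgt]
  have hEcast : ∀ a2 (k : ℕ), {ω | k ≤ N a2 ω}
      = {ω | (k:ℝ) ≤ ∑ i ∈ Finset.range t, (if X i ω = a2 then (1:ℝ) else 0)} := by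
    intro a2 k
    ext ω
    simp only [Set.mem_setOf_eq, ← hNcast a2 ω, Nat.cast_le]
  have hchern : ∀ a2, a2 ≠ r → ∀ k : ℕ, (μ {ω | k ≤ N a2 ω}).toReal
      ≤ Real.exp ((t:ℝ) * l^2 + l * ((t:ℝ)*p)) * x ^ k := by
    intro a2 hne2 k
    have h1 : (μ {ω | (k:ℝ) ≤ ∑ i ∈ Finset.range t, (if X i ω = a2 then (1:ℝ) else 0)}).toReal
        ≤ Real.exp ((t:ℝ) * (l + l^2) * P a2 - l * k) :=
      aux_chernoff μ X hX hindep hident a2 t k hl0.le hl1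
    rw [hEcast a2 k]
    refine h1.trans ?_
    have hPa : P a2 ≤ p := hpa ⟨a2, hne2⟩
    have hxk : x ^ k = Real.exp (-(l * k)) := by
      rw [hxdef, ← Real.exp_nat_mul]; congr 1; ring
    rw [hxk, ← Real.exp_add]
    apply Real.exp_le_exp.2
    have h3 : (t:ℝ)*l*(P a2) ≤ (t:ℝ)*l*p :=
      mul_le_mul_of_nonneg_left hPa (by positivity)
    have h4 : ((t:ℝ)*l^2) * (P a2) ≤ ((t:ℝ)*l^2) * 1 :=
      mul_le_mul_of_nonneg_left (hP1 a2) (by positivity)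
    nlinarith only [h3, h4]
  have hTbound : ∀ k : ℕ, 1 ≤ k →
      (μ (⋃ (a : {a : {b : α // b ≠ r} // P a.1 ≤ 1/((t:ℝ)+1)}), {ω | k ≤ N a.1.1 ω})).toReal
      ≤ ((t:ℝ)+1) / (k.factorial : ℝ) := by
    intro k hk1
    set θ : ℝ≥0∞ := ENNReal.ofReal (1/((t:ℝ)+1)) with hθdef
    have hstep : ∀ a : {a : {b : α // b ≠ r} // P a.1 ≤ 1/((t:ℝ)+1)},
        μ {ω | k ≤ N a.1.1 ω} ≤ (t.choose k : ℝ≥0∞) * θ^(k-1) * q a.1.1 := by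
      intro a
      have hub : μ {ω | k ≤ N a.1.1 ω} ≤ (t.choose k : ℝ≥0∞) * (q a.1.1) ^ k := by
        simp only [hNdef]
        exact aux_union_bound μ X hX hindep hident a.1.1 t k
      have hq' : q a.1.1 ≤ θ := by
        rw [hθdef, ← ENNReal.ofReal_toReal (hqtop a.1.1)]
        exact ENNReal.ofReal_le_ofReal a.2
      calc μ {ω | k ≤ N a.1.1 ω} ≤ (t.choose k : ℝ≥0∞) * (q a.1.1)^k := hub
        _ = (t.choose k : ℝ≥0∞) * ((q a.1.1)^(k-1) * q a.1.1) := by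
            rw [← pow_succ, Nat.sub_add_cancel hk1]
        _ ≤ (t.choose k : ℝ≥0∞) * (θ^(k-1) * q a.1.1) :=
            mul_le_mul_right (mul_le_mul_left (pow_le_pow_left' hq' _) _) _
        _ = (t.choose k : ℝ≥0∞) * θ^(k-1) * q a.1.1 := by rw [mul_assoc]
    have hchain : μ (⋃ (a : {a : {b : α // b ≠ r} // P a.1 ≤ 1/((t:ℝ)+1)}), {ω | k ≤ N a.1.1 ω})
        ≤ (t.choose k : ℝ≥0∞) * θ^(k-1) := by
      calc μ (⋃ (a : {a : {b : α // b ≠ r} // P a.1 ≤ 1/((t:ℝ)+1)}), {ω | k ≤ N a.1.1 ω})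
          ≤ ∑' (a : {a : {b : α // b ≠ r} // P a.1 ≤ 1/((t:ℝ)+1)}), μ {ω | k ≤ N a.1.1 ω} :=
            measure_iUnion_le _
        _ ≤ ∑' (a : {a : {b : α // b ≠ r} // P a.1 ≤ 1/((t:ℝ)+1)}),
              (t.choose k : ℝ≥0∞) * θ^(k-1) * q a.1.1 := ENNReal.tsum_le_tsum hstep
        _ = (t.choose k : ℝ≥0∞) * θ^(k-1)
              * ∑' (a : {a : {b : α // b ≠ r} // P a.1 ≤ 1/((t:ℝ)+1)}), q a.1.1 :=
            ENNReal.tsum_mul_left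
        _ ≤ (t.choose k : ℝ≥0∞) * θ^(k-1) * 1 := by
            refine mul_le_mul_right ?_ _
            refine le_trans ?_ htsum_q
            exact ENNReal.tsum_comp_le_tsum_of_injective
              (fun a b hab => Subtype.ext (Subtype.ext hab)) q
        _ = (t.choose k : ℝ≥0∞) * θ^(k-1) := mul_one _
    have hfin : ((t.choose k : ℝ≥0∞) * θ^(k-1)) ≠ ⊤ :=
      ENNReal.mul_ne_top (by simp) (ENNReal.pow_ne_top ENNReal.ofReal_ne_top)
    have h2 := ENNReal.toReal_mono hfin hchain
    rw [ENNReal.toReal_mul, ENNReal.toReal_pow, ENNReal.toReal_natCast, hθdef,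
      ENNReal.toReal_ofReal (by positivity)] at h2
    refine h2.trans ?_
    have hnat : (k.factorial : ℝ) * (t.choose k : ℝ) ≤ ((t:ℝ)+1)^k := by
      have h3 : k.factorial * t.choose k ≤ (t+1)^k := by
        calc k.factorial * t.choose k = t.descFactorial k :=
            (Nat.descFactorial_eq_factorial_mul_choose t k).symm
          _ ≤ t^k := Nat.descFactorial_le_pow t k
          _ ≤ (t+1)^k := Nat.pow_le_pow_left (by omega) k
      exact_mod_cast h3
    have hpow : (0:ℝ) < ((t:ℝ)+1)^(k-1) := by positivity
    have hfactpos : (0:ℝ) < (k.factorial : ℝ) := by exact_mod_cast k.factorial_pos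
    have hrw : ((1:ℝ)/((t:ℝ)+1))^(k-1) = 1/(((t:ℝ)+1)^(k-1)) := by
      rw [div_pow, one_pow]
    rw [hrw, mul_one_div, div_le_div_iff₀ hpow hfactpos]
    have hps : ((t:ℝ)+1) * ((t:ℝ)+1)^(k-1) = ((t:ℝ)+1)^k := by
      rw [← pow_succ', Nat.sub_add_cancel hk1]
    rw [← hps] at hnat
    linarith only [hnat]
  have hSbound : ∀ k : ℕ, (μ (⋃ a2 ∈ SF, {ω | k ≤ N a2 ω})).toReal
      ≤ ((t:ℝ)+1) * (Real.exp ((t:ℝ)*l^2 + l*((t:ℝ)*p)) * x ^ k) := by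
    intro k
    have h1 : μ (⋃ a2 ∈ SF, {ω | k ≤ N a2 ω}) ≤ ∑ a2 ∈ SF, μ {ω | k ≤ N a2 ω} :=
      measure_biUnion_finset_le _ _
    have hsumne : (∑ a2 ∈ SF, μ {ω | k ≤ N a2 ω}) ≠ ⊤ :=
      (ENNReal.sum_lt_top.2 fun a2 _ => measure_lt_top μ _).ne
    have h2 := ENNReal.toReal_mono hsumne h1
    rw [ENNReal.toReal_sum (fun a2 _ => measure_ne_top μ _)] at h2
    refine h2.trans ?_
    calc ∑ a2 ∈ SF, (μ {ω | k ≤ N a2 ω}).toReal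
        ≤ ∑ _a2 ∈ SF, Real.exp ((t:ℝ)*l^2 + l*((t:ℝ)*p)) * x ^ k :=
          Finset.sum_le_sum fun a2 ha => hchern a2 ((hSfin.mem_toFinset.1 ha).1) k
      _ = (SF.card : ℝ) * (Real.exp ((t:ℝ)*l^2 + l*((t:ℝ)*p)) * x^k) := by
          rw [Finset.sum_const, nsmul_eq_mul]
      _ ≤ ((t:ℝ)+1) * (Real.exp ((t:ℝ)*l^2 + l*((t:ℝ)*p)) * x^k) :=
          mul_le_mul_of_nonneg_right hSFcard (by positivity)
  have hkey : ∀ k ∈ Finset.Ioc k₀ t, (μ (U k)).toReal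
      ≤ ((t:ℝ)+1) * (Real.exp ((t:ℝ)*l^2 + l*((t:ℝ)*p)) * x ^ k) + ((t:ℝ)+1)/(k.factorial : ℝ) := by
    intro k hkmem
    have hk1 : 1 ≤ k := by
      have := (Finset.mem_Ioc.1 hkmem).1; omega
    have hsplit : U k ⊆ (⋃ a2 ∈ SF, {ω | k ≤ N a2 ω})
        ∪ (⋃ (a : {a : {b : α // b ≠ r} // P a.1 ≤ 1/((t:ℝ)+1)}), {ω | k ≤ N a.1.1 ω}) := by
      intro ω hω
      obtain ⟨a, ha⟩ := Set.mem_iUnion.1 hω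
      rcases le_or_gt (P a.1) (1/((t:ℝ)+1)) with hle | hlt
      · exact Or.inr (Set.mem_iUnion.2 ⟨⟨a, hle⟩, ha⟩)
      · have hmemSF : a.1 ∈ SF := (hSfin.mem_toFinset).2 ⟨a.2, hlt⟩
        exact Or.inl (Set.mem_biUnion hmemSF ha)
    have hμ2 : μ (U k) ≤ μ (⋃ a2 ∈ SF, {ω | k ≤ N a2 ω})
        + μ (⋃ (a : {a : {b : α // b ≠ r} // P a.1 ≤ 1/((t:ℝ)+1)}), {ω | k ≤ N a.1.1 ω}) :=
      (measure_mono hsplit).trans (measure_union_le _ _)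
    have hadd : (μ (U k)).toReal ≤ (μ (⋃ a2 ∈ SF, {ω | k ≤ N a2 ω})).toReal
        + (μ (⋃ (a : {a : {b : α // b ≠ r} // P a.1 ≤ 1/((t:ℝ)+1)}),
            {ω | k ≤ N a.1.1 ω})).toReal := by
      have hne2 : μ (⋃ a2 ∈ SF, {ω | k ≤ N a2 ω})
          + μ (⋃ (a : {a : {b : α // b ≠ r} // P a.1 ≤ 1/((t:ℝ)+1)}), {ω | k ≤ N a.1.1 ω}) ≠ ⊤ :=
        ENNReal.add_ne_top.2 ⟨measure_ne_top μ _, measure_ne_top μ _⟩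
      have h5 := ENNReal.toReal_mono hne2 hμ2
      rwa [ENNReal.toReal_add (measure_ne_top μ _) (measure_ne_top μ _)] at h5
    exact hadd.trans (add_le_add (hSbound k) (hTbound k hk1))
  have hintegral : ∫ ω, (⨆ a : {b : α // b ≠ r}, (N a.1 ω : ℝ)) ∂μ
      ≤ (k₀ : ℝ) + ∑ k ∈ Finset.Ioc k₀ t, (μ (U k)).toReal := by
    have hindint : ∀ k : ℕ, Integrable (fun ω => (U k).indicator (fun _ => (1:ℝ)) ω) μ :=
      fun k => (integrable_const (1:ℝ)).indicator (hUmeas k)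
    have hgint : Integrable (fun ω => (k₀:ℝ)
        + ∑ k ∈ Finset.Ioc k₀ t, (U k).indicator (fun _ => (1:ℝ)) ω) μ :=
      (integrable_const _).add (integrable_finset_sum _ fun k _ => hindint k)
    have hptw : ∀ ω, (⨆ a : {b : α // b ≠ r}, (N a.1 ω : ℝ))
        ≤ (k₀:ℝ) + ∑ k ∈ Finset.Ioc k₀ t, (U k).indicator (fun _ => (1:ℝ)) ω := by
      intro ω
      have hnonneg : (0:ℝ) ≤ ∑ k ∈ Finset.Ioc k₀ t, (U k).indicator (fun _ => (1:ℝ)) ω :=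
        Finset.sum_nonneg fun k _ => Set.indicator_nonneg (fun _ _ => zero_le_one) ω
      refine ciSup_le fun a => ?_
      rcases le_or_gt ((N a.1 ω : ℝ)) (k₀:ℝ) with h | h
      · linarith only [h, hnonneg]
      · have hkn : k₀ < N a.1 ω := by exact_mod_cast h
        have hnt : N a.1 ω ≤ t := hNle a.1 ω
        have hsub2 : Finset.Ioc k₀ (N a.1 ω) ⊆ Finset.Ioc k₀ t := Finset.Ioc_subset_Ioc_right hnt
        have h1 : ∀ k ∈ Finset.Ioc k₀ (N a.1 ω), (U k).indicator (fun _ => (1:ℝ)) ω = 1 := by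
          intro k hkm
          have hkle : k ≤ N a.1 ω := (Finset.mem_Ioc.1 hkm).2
          have hmem : ω ∈ U k := Set.mem_iUnion.2 ⟨a, hkle⟩
          simp [Set.indicator_of_mem hmem]
        have h2 : ∑ k ∈ Finset.Ioc k₀ (N a.1 ω), (U k).indicator (fun _ => (1:ℝ)) ω
            ≤ ∑ k ∈ Finset.Ioc k₀ t, (U k).indicator (fun _ => (1:ℝ)) ω :=
          Finset.sum_le_sum_of_subset_of_nonneg hsub2
            (fun k _ _ => Set.indicator_nonneg (fun _ _ => zero_le_one) ω)
        have h3 : ∑ k ∈ Finset.Ioc k₀ (N a.1 ω), (U k).indicator (fun _ => (1:ℝ)) ω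
            = ((N a.1 ω - k₀ : ℕ) : ℝ) := by
          rw [Finset.sum_congr rfl h1, Finset.sum_const, nsmul_eq_mul, mul_one, Nat.card_Ioc]
        have h4 : ((N a.1 ω - k₀ : ℕ) : ℝ) = (N a.1 ω : ℝ) - (k₀:ℝ) := by
          rw [Nat.cast_sub hkn.le]
        have h5 : (N a.1 ω : ℝ) - (k₀:ℝ)
            ≤ ∑ k ∈ Finset.Ioc k₀ t, (U k).indicator (fun _ => (1:ℝ)) ω := by
          rw [← h4, ← h3]; exact h2
        linarith only [h5]
    calc ∫ ω, (⨆ a : {b : α // b ≠ r}, (N a.1 ω : ℝ)) ∂μ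
        ≤ ∫ ω, ((k₀:ℝ) + ∑ k ∈ Finset.Ioc k₀ t, (U k).indicator (fun _ => (1:ℝ)) ω) ∂μ :=
          integral_mono_of_nonneg (Filter.Eventually.of_forall hf0) hgint
            (Filter.Eventually.of_forall hptw)
      _ = (k₀:ℝ) + ∑ k ∈ Finset.Ioc k₀ t, (μ (U k)).toReal := by
          rw [integral_add (integrable_const _) (integrable_finset_sum _ fun k _ => hindint k),
            integral_const]
          simp only [measure_univ, probReal_univ, ENNReal.toReal_one, smul_eq_mul, one_mul]
          congr 1
          rw [integral_finset_sum _ fun k _ => hindint k]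
          refine Finset.sum_congr rfl fun k _ => ?_
          rw [MeasureTheory.integral_indicator_const (1:ℝ) (hUmeas k)]
          simp [Measure.real]
  have hfact_sum : ∑ k ∈ Finset.Ioc k₀ t, ((1:ℝ)/(k.factorial : ℝ)) ≤ 2 * (1/2:ℝ)^k₀ := by
    have h1 : ∀ k ∈ Finset.Ioc k₀ t, (1:ℝ)/(k.factorial : ℝ) ≤ 2 * (1/2:ℝ)^k := by
      intro k _
      have h2 : (2:ℝ)^k ≤ 2 * (k.factorial : ℝ) := by exact_mod_cast aux_two_pow_le_factorial k
      have hfp : (0:ℝ) < (k.factorial : ℝ) := by exact_mod_cast k.factorial_pos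
      rw [div_le_iff₀ hfp]
      have hhalf : (1/2:ℝ)^k * 2^k = 1 := by
        rw [← mul_pow]; norm_num
      nlinarith only [mul_le_mul_of_nonneg_left h2 (pow_nonneg (by norm_num : (0:ℝ) ≤ 1/2) k),
        hhalf]
    calc ∑ k ∈ Finset.Ioc k₀ t, ((1:ℝ)/(k.factorial : ℝ))
        ≤ ∑ k ∈ Finset.Ioc k₀ t, 2*(1/2:ℝ)^k := Finset.sum_le_sum h1
      _ = 2 * ∑ k ∈ Finset.Ioc k₀ t, (1/2:ℝ)^k := by rw [Finset.mul_sum]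
      _ ≤ 2 * ((1/2:ℝ)^(k₀+1)/(1-1/2)) :=
          mul_le_mul_of_nonneg_left (aux_geom_tail (by norm_num) (by norm_num) k₀ t) (by norm_num)
      _ = 2*(1/2:ℝ)^k₀ := by
          rw [pow_succ]
          ring
  have hsum_bound : ∑ k ∈ Finset.Ioc k₀ t, (μ (U k)).toReal
      ≤ ((t:ℝ)+1) * Real.exp ((t:ℝ)*l^2 + l*((t:ℝ)*p)) * (x^(k₀+1)/(1-x))
        + ((t:ℝ)+1) * (2*(1/2:ℝ)^k₀) := by
    have h15 := Finset.sum_le_sum hkey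
    have h16 : ∑ k ∈ Finset.Ioc k₀ t,
        (((t:ℝ)+1) * (Real.exp ((t:ℝ)*l^2 + l*((t:ℝ)*p)) * x ^ k) + ((t:ℝ)+1)/(k.factorial : ℝ))
        = ((t:ℝ)+1) * Real.exp ((t:ℝ)*l^2 + l*((t:ℝ)*p)) * (∑ k ∈ Finset.Ioc k₀ t, x^k)
          + ((t:ℝ)+1) * ∑ k ∈ Finset.Ioc k₀ t, ((1:ℝ)/(k.factorial : ℝ)) := by
      rw [Finset.sum_add_distrib, Finset.mul_sum, Finset.mul_sum]
      congr 1
      · exact Finset.sum_congr rfl fun k _ => by ring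
      · exact Finset.sum_congr rfl fun k _ => by rw [mul_one_div]
    rw [h16] at h15
    refine h15.trans (add_le_add ?_ ?_)
    · exact mul_le_mul_of_nonneg_left (aux_geom_tail hx0.le hx1 k₀ t) (by positivity)
    · exact mul_le_mul_of_nonneg_left hfact_sum (by positivity)
  have hexpL : Real.exp L = (t:ℝ)+1 := by rw [hLdef]; exact Real.exp_log (by positivity)
  have hA : ((t:ℝ)+1) * Real.exp ((t:ℝ)*l^2 + l*((t:ℝ)*p)) * (x^(k₀+1)/(1-x)) ≤ 8*c/(9*L) := by
    have hx_pow : x^(k₀+1) = Real.exp (-(l*((k₀:ℝ)+1))) := by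
      rw [hxdef, ← Real.exp_nat_mul]; congr 1; push_cast; ring
    have hcomb : ((t:ℝ)+1) * Real.exp ((t:ℝ)*l^2 + l*((t:ℝ)*p)) * x^(k₀+1)
        = Real.exp (L + ((t:ℝ)*l^2 + l*((t:ℝ)*p)) - l*((k₀:ℝ)+1)) := by
      rw [hx_pow, ← hexpL, ← Real.exp_add, ← Real.exp_add]
      congr 1
      try ring
    have hexple : L + ((t:ℝ)*l^2 + l*((t:ℝ)*p)) - l*((k₀:ℝ)+1) ≤ -(L/8) := by
      have h5 : l*((t:ℝ)*p) - l*((k₀:ℝ)+1) ≤ -(l*(3/2*c)) := by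
        nlinarith only [hk0low, hl0.le]
      linarith only [h5, htl2, hlc]
    have hexp23 : Real.exp (-(L/8)) ≤ 2/3 := by
      have h8 : Real.exp (-(L/8)) ≤ Real.exp (-(Real.log (3/2))) :=
        Real.exp_le_exp.2 (by linarith only [hL32])
      have h9 : Real.exp (-(Real.log (3/2))) = 2/3 := by
        rw [Real.exp_neg, Real.exp_log (by norm_num : (0:ℝ) < 3/2)]
        norm_num
      rw [h9] at h8
      exact h8
    have h1xpos : (0:ℝ) < 1 - x := by linarith only [h1x, hl0]
    have hstep1 : ((t:ℝ)+1) * Real.exp ((t:ℝ)*l^2 + l*((t:ℝ)*p)) * (x^(k₀+1)/(1-x))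
        = (((t:ℝ)+1) * Real.exp ((t:ℝ)*l^2 + l*((t:ℝ)*p)) * x^(k₀+1)) / (1-x) := by ring
    rw [hstep1, hcomb]
    have hstep2 : Real.exp (L + ((t:ℝ)*l^2 + l*((t:ℝ)*p)) - l*((k₀:ℝ)+1)) ≤ 2/3 :=
      le_trans (Real.exp_le_exp.2 hexple) hexp23
    calc Real.exp (L + ((t:ℝ)*l^2 + l*((t:ℝ)*p)) - l*((k₀:ℝ)+1)) / (1-x)
        ≤ (2/3) / (1-x) := by gcongr
      _ ≤ (2/3) * (2/l) := by
          rw [div_eq_mul_inv]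
          refine mul_le_mul_of_nonneg_left ?_ (by norm_num)
          have h6 : (1:ℝ)/(1-x) ≤ 1/(l/2) := one_div_le_one_div_of_le (by positivity) h1x
          rw [one_div_div] at h6
          rw [← one_div]
          linarith only [h6]
      _ = 16*(t:ℝ)/(9*c) := by
          rw [hldef]
          field_simp
          ring
      _ = 8*c/(9*L) := by
          rw [div_eq_div_iff (by positivity) (by positivity)]
          linear_combination (-72 : ℝ) * hc2
  have hB2 : ((t:ℝ)+1) * (2 * (1/2:ℝ)^k₀) ≤ 1 := by
    have hexp4 : 1 + L + L^2/2 + L^3/6 ≤ Real.exp L := by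
      have h := Real.sum_le_exp_of_nonneg hLpos.le 4
      have h7 : ∑ i ∈ Finset.range 4, L^i / (i.factorial : ℝ)
          = 1 + L + L^2/2 + L^3/6 := by
        simp [Finset.sum_range_succ, Nat.factorial]
        try ring
      rw [h7] at h
      exact h
    have htge : L^3/6 ≤ (t:ℝ) := by
      linarith only [hexp4, hexpL, sq_nonneg L, hLpos.le]
    have hcL : (0:ℝ) < L^2/2 + c := by nlinarith only [hLpos, hc0]
    have hcge : L^2/2 ≤ c := by
      nlinarith only [hc2, hc0, hcL,
        mul_le_mul_of_nonneg_right htge (by linarith only [hLpos] : (0:ℝ) ≤ 2*L)]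
    have h2t : 2*((t:ℝ)+1) ≤ (2:ℝ)^k₀ := by
      have hpow2 : (2:ℝ)^k₀ = Real.exp ((k₀:ℝ) * Real.log 2) := by
        rw [Real.exp_nat_mul, Real.exp_log (by norm_num : (0:ℝ) < 2)]
      have h2texp : 2*((t:ℝ)+1) = Real.exp (Real.log 2 + L) := by
        rw [Real.exp_add, Real.exp_log (by norm_num : (0:ℝ) < 2), hexpL]
      rw [hpow2, h2texp]
      apply Real.exp_le_exp.2
      have hk15 : 3/2*c ≤ (k₀:ℝ) := by linarith only [hk0low, htp0]
      have hk0log : 3/2*c*Real.log 2 ≤ (k₀:ℝ)*Real.log 2 :=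
        mul_le_mul_of_nonneg_right hk15 (by linarith only [hlog2lb])
      have h9 : (L^2/2) * Real.log 2 ≤ c * Real.log 2 :=
        mul_le_mul_of_nonneg_right hcge (by linarith only [hlog2lb])
      have h10 : (0.693:ℝ)*(L^2/2) ≤ (L^2/2) * Real.log 2 := by
        nlinarith only [mul_nonneg (sq_nonneg L)
          (by linarith only [hlog2lb] : (0:ℝ) ≤ Real.log 2 - 0.693)]
      nlinarith only [hk0log, h9, h10, hlog2ub, hL27, sq_nonneg (L - 2.77)]
    calc ((t:ℝ)+1) * (2*(1/2:ℝ)^k₀) = (2*((t:ℝ)+1)) * (1/2:ℝ)^k₀ := by ring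
      _ ≤ (2:ℝ)^k₀ * (1/2:ℝ)^k₀ := mul_le_mul_of_nonneg_right h2t (by positivity)
      _ = 1 := by rw [← mul_pow]; norm_num
  have hfinal : (k₀:ℝ) + (8*c/(9*L) + 1) ≤ (t:ℝ)*p + 2*c := by
    have h12 : (0:ℝ) ≤ c/2 - 2 := by linarith only [hc12]
    have h11 : 8*c/(9*L) ≤ c/2 - 2 := by
      rw [div_le_iff₀ (by positivity : (0:ℝ) < 9*L)]
      nlinarith only [mul_le_mul_of_nonneg_right hL27 h12, hc12, h12]
    linarith only [hk0up, h11]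
  calc ∫ ω, (⨆ a : {b : α // b ≠ r}, (N a.1 ω : ℝ)) ∂μ
      ≤ (k₀:ℝ) + ∑ k ∈ Finset.Ioc k₀ t, (μ (U k)).toReal := hintegral
    _ ≤ (k₀:ℝ) + (8*c/(9*L) + 1) := by linarith only [hsum_bound, hA, hB2]
    _ ≤ (t:ℝ)*p + 2*c := hfinal
end
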